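/- If C is a finite family of (possibly rotated) squares of arbitrary sizes with Δ(C) ≥ 2, then the intersection graph of C is (9(Δ(C)−1) − 1)-degenerate, and hence χ(C) ≤ 9(Δ(C) − 1). -/

import Mathlib

open Classical MeasureTheory
noncomputable section

/-- Points of the Euclidean plane. -/
abbrev Pt := EuclideanSpace ℝ (Fin 2)

/-- A finite point set `H` hits every member of the family `F`. -/
def Hits (H : Finset Pt) (F : Finset (Set Pt)) : Prop := ∀ S ∈ F, ∃ p ∈ H, p ∈ S

/-- The hitting number τ of a family. -/
def hitNum (F : Finset (Set Pt)) : ℕ := sInf {n | ∃ H : Finset Pt, H.card = n ∧ Hits H F}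

/-- The packing number ν of a family. -/
def packNum (F : Finset (Set Pt)) : ℕ :=
  sSup {n | ∃ P ⊆ F, P.card = n ∧ (P : Set (Set Pt)).Pairwise Disjoint}

/-- The maximum degree Δ of a family: the maximum number of members containing a common point. -/
def maxDeg (F : Finset (Set Pt)) : ℕ :=
  sSup {n | ∃ p : Pt, (F.filter fun S => p ∈ S).card = n}

/-- The chromatic number χ of the intersection graph of a family. -/
def chromNum (F : Finset (Set Pt)) : ℕ :=
  sInf {n | ∃ col : Set Pt → ℕ, (∀ S ∈ F, col S < n) ∧
    ∀ S ∈ F, ∀ T ∈ F, S ≠ T → (S ∩ T).Nonempty → col S ≠ col T}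

/-- Hitting-`t`-degeneracy: every nonempty subfamily has a member whose closed
neighbourhood within the subfamily can be hit by at most `t` points. -/
def HitDeg (t : ℕ) (F : Finset (Set Pt)) : Prop :=
  ∀ F' ⊆ F, F'.Nonempty → ∃ S ∈ F',
    hitNum (F'.filter fun T => (T ∩ S).Nonempty) ≤ t

/-- `D`-degeneracy of a family: every nonempty subfamily has a member intersecting
at most `D` other members of the subfamily. -/
def FamDeg (D : ℕ) (F : Finset (Set Pt)) : Prop :=
  ∀ F' ⊆ F, F'.Nonempty → ∃ S ∈ F',
    (F'.filter fun T => T ≠ S ∧ (T ∩ S).Nonempty).card ≤ D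

/-- First coordinate of `x - c` in the rotated (by `θ`) orthonormal frame. -/
def sqForm1 (c : Pt) (θ : ℝ) (x : Pt) : ℝ :=
  Real.cos θ * (x 0 - c 0) + Real.sin θ * (x 1 - c 1)

/-- Second coordinate of `x - c` in the rotated (by `θ`) orthonormal frame. -/
def sqForm2 (c : Pt) (θ : ℝ) (x : Pt) : ℝ :=
  Real.sin θ * (x 0 - c 0) - Real.cos θ * (x 1 - c 1)

/-- The (closed, possibly rotated) square with centre `c`, rotation angle `θ` and side `s`. -/
def sqSet (c : Pt) (θ s : ℝ) : Set Pt :=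
  {x | |sqForm1 c θ x| ≤ s / 2 ∧ |sqForm2 c θ x| ≤ s / 2}

/-- The four vertices of the square with centre `c`, angle `θ` and side `s`. -/
def sqVertices (c : Pt) (θ s : ℝ) : Set Pt :=
  {x | |sqForm1 c θ x| = s / 2 ∧ |sqForm2 c θ x| = s / 2}

/-- A set is a (possibly rotated) unit square. -/
def IsUnitSquare (S : Set Pt) : Prop := ∃ c θ, S = sqSet c θ 1

/-- A set is a (possibly rotated) square of some positive side length. -/
def IsSquareSet (S : Set Pt) : Prop := ∃ c θ s, 0 < s ∧ S = sqSet c θ s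

set_option maxHeartbeats 1000000

namespace SquaresProof

structure Cfg (h k c s b1 b2 z1 z2 : ℝ) : Prop where
  hh : 0 < h
  hk : 0 < k
  unit : c^2 + s^2 = 1
  z1S : |z1| ≤ h
  z2S : |z2| ≤ h
  zT1 : |(z1 - b1)*c - (z2 - b2)*s| ≤ k
  zT2 : |(z1 - b1)*s + (z2 - b2)*c| ≤ k
  vT : ∀ σ τ : ℝ, σ^2 = 1 → τ^2 = 1 →
      ¬(|b1 + k*(σ*c + τ*s)| ≤ h ∧ |b2 + k*(-σ*s + τ*c)| ≤ h)
  vS : ∀ σ τ : ℝ, σ^2 = 1 → τ^2 = 1 →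
      ¬(|(σ*h - b1)*c - (τ*h - b2)*s| ≤ k ∧ |(σ*h - b1)*s + (τ*h - b2)*c| ≤ k)

variable {h k c s b1 b2 z1 z2 : ℝ}

private lemma sq1 : (1:ℝ)^2 = 1 := one_pow 2
private lemma sqm1 : (-1:ℝ)^2 = 1 := by norm_num

lemma Cfg.rotT (C : Cfg h k c s b1 b2 z1 z2) : Cfg h k s (-c) b1 b2 z1 z2 := by
  obtain ⟨hh, hk, unit, z1S, z2S, zT1, zT2, vT, vS⟩ := C
  refine ⟨hh, hk, by linear_combination unit, z1S, z2S, ?_, ?_, ?_, ?_⟩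
  · rw [show (z1 - b1)*s - (z2 - b2)*(-c) = (z1 - b1)*s + (z2 - b2)*c by ring]; exact zT2
  · rw [show (z1 - b1)*(-c) + (z2 - b2)*s = -((z1 - b1)*c - (z2 - b2)*s) by ring, abs_neg]
    exact zT1
  · intro σ τ hσ hτ hcontra
    refine vT (-τ) σ (by linear_combination hτ) hσ ⟨?_, ?_⟩
    · rw [show b1 + k*(-τ*c + σ*s) = b1 + k*(σ*s + τ*(-c)) by ring]; exact hcontra.1
    · rw [show b2 + k*(- -τ*s + σ*c) = b2 + k*(-σ*(-c) + τ*s) by ring]; exact hcontra.2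
  · intro σ τ hσ hτ hcontra
    refine vS σ τ hσ hτ ⟨?_, ?_⟩
    · rw [show (σ*h - b1)*c - (τ*h - b2)*s
        = -((σ*h - b1)*(-c) + (τ*h - b2)*s) by ring, abs_neg]
      exact hcontra.2
    · rw [show (σ*h - b1)*s + (τ*h - b2)*c = (σ*h - b1)*s - (τ*h - b2)*(-c) by ring]
      exact hcontra.1

lemma Cfg.negu (C : Cfg h k c s b1 b2 z1 z2) : Cfg h k (-c) (-s) (-b1) (-b2) (-z1) (-z2) := by
  obtain ⟨hh, hk, unit, z1S, z2S, zT1, zT2, vT, vS⟩ := C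
  refine ⟨hh, hk, by linear_combination unit, by rwa [abs_neg], by rwa [abs_neg], ?_, ?_, ?_, ?_⟩
  · rw [show (-z1 - -b1)*(-c) - (-z2 - -b2)*(-s) = (z1 - b1)*c - (z2 - b2)*s by ring]; exact zT1
  · rw [show (-z1 - -b1)*(-s) + (-z2 - -b2)*(-c) = (z1 - b1)*s + (z2 - b2)*c by ring]; exact zT2
  · intro σ τ hσ hτ hcontra
    refine vT σ τ hσ hτ ⟨?_, ?_⟩
    · rw [show b1 + k*(σ*c + τ*s) = -(-b1 + k*(σ*(-c) + τ*(-s))) by ring, abs_neg]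
      exact hcontra.1
    · rw [show b2 + k*(-σ*s + τ*c) = -(-b2 + k*(-σ*(-s) + τ*(-c))) by ring, abs_neg]
      exact hcontra.2
  · intro σ τ hσ hτ hcontra
    refine vS (-σ) (-τ) (by linear_combination hσ) (by linear_combination hτ) ⟨?_, ?_⟩
    · rw [show (-σ*h - b1)*c - (-τ*h - b2)*s = (σ*h - -b1)*(-c) - (τ*h - -b2)*(-s) by ring]
      exact hcontra.1
    · rw [show (-σ*h - b1)*s + (-τ*h - b2)*c = (σ*h - -b1)*(-s) + (τ*h - -b2)*(-c) by ring]
      exact hcontra.2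

lemma Cfg.rotS (C : Cfg h k c s b1 b2 z1 z2) : Cfg h k (-s) c b2 (-b1) z2 (-z1) := by
  obtain ⟨hh, hk, unit, z1S, z2S, zT1, zT2, vT, vS⟩ := C
  refine ⟨hh, hk, by linear_combination unit, z2S, by rwa [abs_neg], ?_, ?_, ?_, ?_⟩
  · rw [show (z2 - b2)*(-s) - (-z1 - -b1)*c = (z1 - b1)*c - (z2 - b2)*s by ring]; exact zT1
  · rw [show (z2 - b2)*c + (-z1 - -b1)*(-s) = (z1 - b1)*s + (z2 - b2)*c by ring]; exact zT2
  · intro σ τ hσ hτ hcontra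
    refine vT σ τ hσ hτ ⟨?_, ?_⟩
    · rw [show b1 + k*(σ*c + τ*s) = -(-b1 + k*(-σ*c + τ*(-s))) by ring, abs_neg]
      exact hcontra.2
    · rw [show b2 + k*(-σ*s + τ*c) = b2 + k*(σ*(-s) + τ*c) by ring]; exact hcontra.1
  · intro σ τ hσ hτ hcontra
    refine vS (-τ) σ (by linear_combination hτ) hσ ⟨?_, ?_⟩
    · rw [show (-τ*h - b1)*c - (σ*h - b2)*s = (σ*h - b2)*(-s) - (τ*h - -b1)*c by ring]
      exact hcontra.1
    · rw [show (-τ*h - b1)*s + (σ*h - b2)*c = (σ*h - b2)*c + (τ*h - -b1)*(-s) by ring]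
      exact hcontra.2

lemma Cfg.reflect (C : Cfg h k c s b1 b2 z1 z2) : Cfg h k s c b1 (-b2) z1 (-z2) := by
  obtain ⟨hh, hk, unit, z1S, z2S, zT1, zT2, vT, vS⟩ := C
  refine ⟨hh, hk, by linear_combination unit, z1S, by rwa [abs_neg], ?_, ?_, ?_, ?_⟩
  · rw [show (z1 - b1)*s - (-z2 - -b2)*c = (z1 - b1)*s + (z2 - b2)*c by ring]; exact zT2
  · rw [show (z1 - b1)*c + (-z2 - -b2)*s = (z1 - b1)*c - (z2 - b2)*s by ring]; exact zT1
  · intro σ τ hσ hτ hcontra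
    refine vT τ σ hτ hσ ⟨?_, ?_⟩
    · rw [show b1 + k*(τ*c + σ*s) = b1 + k*(σ*s + τ*c) by ring]; exact hcontra.1
    · rw [show b2 + k*(-τ*s + σ*c) = -(-b2 + k*(-σ*c + τ*s)) by ring, abs_neg]
      exact hcontra.2
  · intro σ τ hσ hτ hcontra
    refine vS σ (-τ) hσ (by linear_combination hτ) ⟨?_, ?_⟩
    · rw [show (σ*h - b1)*c - (-τ*h - b2)*s = (σ*h - b1)*c + (τ*h - -b2)*s by ring]
      exact hcontra.2
    · rw [show (σ*h - b1)*s + (-τ*h - b2)*c = (σ*h - b1)*s - (τ*h - -b2)*c by ring]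
      exact hcontra.1

lemma Cfg.swap (C : Cfg h k c s b1 b2 z1 z2) :
    Cfg k h c (-s) (-b1*c + b2*s) (-b1*s - b2*c)
      ((z1 - b1)*c - (z2 - b2)*s) ((z1 - b1)*s + (z2 - b2)*c) := by
  obtain ⟨hh, hk, unit, z1S, z2S, zT1, zT2, vT, vS⟩ := C
  refine ⟨hk, hh, by linear_combination unit, zT1, zT2, ?_, ?_, ?_, ?_⟩
  · rw [show ((z1 - b1)*c - (z2 - b2)*s - (-b1*c + b2*s))*c
        - ((z1 - b1)*s + (z2 - b2)*c - (-b1*s - b2*c))*(-s) = z1 + (z1*(c^2+s^2) - z1) by ring,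
      show z1 + (z1*(c^2+s^2) - z1) = z1 by rw [unit]; ring]
    exact z1S
  · rw [show ((z1 - b1)*c - (z2 - b2)*s - (-b1*c + b2*s))*(-s)
        + ((z1 - b1)*s + (z2 - b2)*c - (-b1*s - b2*c))*c = z2 + (z2*(c^2+s^2) - z2) by ring,
      show z2 + (z2*(c^2+s^2) - z2) = z2 by rw [unit]; ring]
    exact z2S
  · intro σ τ hσ hτ hcontra
    refine vS σ τ hσ hτ ⟨?_, ?_⟩
    · rw [show (σ*h - b1)*c - (τ*h - b2)*s = -b1*c + b2*s + h*(σ*c + τ*-s) by ring]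
      exact hcontra.1
    · rw [show (σ*h - b1)*s + (τ*h - b2)*c = -b1*s - b2*c + h*(-σ*-s + τ*c) by ring]
      exact hcontra.2
  · intro σ τ hσ hτ hcontra
    refine vT σ τ hσ hτ ⟨?_, ?_⟩
    · have e1 : (σ*k - (-b1*c + b2*s))*c - (τ*k - (-b1*s - b2*c))*(-s)
          = b1 + k*(σ*c + τ*s) := by linear_combination b1 * unit
      rw [← e1]; exact hcontra.1
    · have e2 : (σ*k - (-b1*c + b2*s))*(-s) + (τ*k - (-b1*s - b2*c))*c
          = b2 + k*(-σ*s + τ*c) := by linear_combination b2 * unit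
      rw [← e2]; exact hcontra.2

/-- corners of S relative to T, normalized forms -/
lemma Cfg.cRp (C : Cfg h k c s b1 b2 z1 z2) :
    k < |(h - b1)*c - (h - b2)*s| ∨ k < |(h - b1)*s + (h - b2)*c| := by
  have H := C.vS 1 1 sq1 sq1
  rw [not_and_or, not_le, not_le,
    show (1*h - b1)*c - (1*h - b2)*s = (h-b1)*c - (h-b2)*s by ring,
    show (1*h - b1)*s + (1*h - b2)*c = (h-b1)*s + (h-b2)*c by ring] at H
  exact H

lemma Cfg.cRm (C : Cfg h k c s b1 b2 z1 z2) :
    k < |(h - b1)*c - (-h - b2)*s| ∨ k < |(h - b1)*s + (-h - b2)*c| := by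
  have H := C.vS 1 (-1) sq1 sqm1
  rw [not_and_or, not_le, not_le,
    show (1*h - b1)*c - (-1*h - b2)*s = (h-b1)*c - (-h-b2)*s by ring,
    show (1*h - b1)*s + (-1*h - b2)*c = (h-b1)*s + (-h-b2)*c by ring] at H
  exact H

lemma Cfg.cLp (C : Cfg h k c s b1 b2 z1 z2) :
    k < |(-h - b1)*c - (h - b2)*s| ∨ k < |(-h - b1)*s + (h - b2)*c| := by
  have H := C.vS (-1) 1 sqm1 sq1
  rw [not_and_or, not_le, not_le,
    show (-1*h - b1)*c - (1*h - b2)*s = (-h-b1)*c - (h-b2)*s by ring,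
    show (-1*h - b1)*s + (1*h - b2)*c = (-h-b1)*s + (h-b2)*c by ring] at H
  exact H

lemma Cfg.cLm (C : Cfg h k c s b1 b2 z1 z2) :
    k < |(-h - b1)*c - (-h - b2)*s| ∨ k < |(-h - b1)*s + (-h - b2)*c| := by
  have H := C.vS (-1) (-1) sqm1 sqm1
  rw [not_and_or, not_le, not_le,
    show (-1*h - b1)*c - (-1*h - b2)*s = (-h-b1)*c - (-h-b2)*s by ring,
    show (-1*h - b1)*s + (-1*h - b2)*c = (-h-b1)*s + (-h-b2)*c by ring] at H
  exact H

/-- vertices of T relative to S, normalized forms -/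
lemma Cfg.wV1 (C : Cfg h k c s b1 b2 z1 z2) :
    h < |b1 - k*(c+s)| ∨ h < |b2 + k*(s-c)| := by
  have H := C.vT (-1) (-1) sqm1 sqm1
  rw [not_and_or, not_le, not_le,
    show b1 + k*(-1*c + -1*s) = b1 - k*(c+s) by ring,
    show b2 + k*(- -1*s + -1*c) = b2 + k*(s-c) by ring] at H
  exact H

lemma Cfg.wV2 (C : Cfg h k c s b1 b2 z1 z2) :
    h < |b1 + k*(c-s)| ∨ h < |b2 - k*(c+s)| := by
  have H := C.vT 1 (-1) sq1 sqm1
  rw [not_and_or, not_le, not_le,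
    show b1 + k*(1*c + -1*s) = b1 + k*(c-s) by ring,
    show b2 + k*(-1*s + -1*c) = b2 - k*(c+s) by ring] at H
  exact H

lemma Cfg.wV4 (C : Cfg h k c s b1 b2 z1 z2) :
    h < |b1 + k*(s-c)| ∨ h < |b2 + k*(c+s)| := by
  have H := C.vT (-1) 1 sqm1 sq1
  rw [not_and_or, not_le, not_le,
    show b1 + k*(-1*c + 1*s) = b1 + k*(s-c) by ring,
    show b2 + k*(- -1*s + 1*c) = b2 + k*(c+s) by ring] at H
  exact H

/-- basic z-derived facts -/
lemma Cfg.zfacts (C : Cfg h k c s b1 b2 z1 z2) (hc : 0 ≤ c) (hs : 0 ≤ s) :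
    b1 - k*(c+s) ≤ z1 ∧ z1 ≤ b1 + k*(c+s) ∧ b2 - k*(c+s) ≤ z2 ∧ z2 ≤ b2 + k*(c+s) := by
  have hX := abs_le.mp C.zT1
  have hY := abs_le.mp C.zT2
  have e1 : c*((z1 - b1)*c - (z2 - b2)*s) + s*((z1 - b1)*s + (z2 - b2)*c) = z1 - b1 := by
    linear_combination (z1 - b1) * C.unit
  have e2 : -s*((z1 - b1)*c - (z2 - b2)*s) + c*((z1 - b1)*s + (z2 - b2)*c) = z2 - b2 := by
    linear_combination (z2 - b2) * C.unit
  have p1 := mul_le_mul_of_nonneg_left hX.1 hc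
  have p2 := mul_le_mul_of_nonneg_left hX.2 hc
  have p3 := mul_le_mul_of_nonneg_left hY.1 hs
  have p4 := mul_le_mul_of_nonneg_left hY.2 hs
  have p5 := mul_le_mul_of_nonneg_left hX.1 hs
  have p6 := mul_le_mul_of_nonneg_left hX.2 hs
  have p7 := mul_le_mul_of_nonneg_left hY.1 hc
  have p8 := mul_le_mul_of_nonneg_left hY.2 hc
  refine ⟨by linarith, by linarith, by linarith, by linarith⟩

/-- Branch: constraints `X ≥ -k` and `Y ≤ k` of T hold on all of S.
    (hXm : X(L+) ≥ -k, hYp : Y(R+) ≤ k). Leads to contradiction. -/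
lemma Cfg.br_pm (C : Cfg h k c s b1 b2 z1 z2) (hc : 0 ≤ c) (hs : 0 ≤ s)
    (hb1 : h < b1)
    (hXm : -k ≤ (-h - b1)*c - (h - b2)*s)
    (hYp : (h - b1)*s + (h - b2)*c ≤ k) : False := by
  obtain ⟨hz1l, hz1u⟩ := abs_le.mp C.z1S
  obtain ⟨hz2l, hz2u⟩ := abs_le.mp C.z2S
  obtain ⟨hXzl, hXzu⟩ := abs_le.mp C.zT1
  obtain ⟨hYzl, hYzu⟩ := abs_le.mp C.zT2
  obtain ⟨hzf1, hzf2, hzf3, hzf4⟩ := C.zfacts hc hs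
  have hh := C.hh
  have hk := C.hk
  have unit := C.unit
  -- monotonicity facts
  have m1 : (z1 - b1)*s + (z2 - b2)*c ≤ (h - b1)*s + (h - b2)*c := by
    have t1 : 0 ≤ (h - z1)*s := mul_nonneg (by linarith) hs
    have t2 : 0 ≤ (h - z2)*c := mul_nonneg (by linarith) hc
    nlinarith [t1, t2]
  have m2 : (-h - b1)*c - (h - b2)*s ≤ (h - b1)*c - (h - b2)*s := by
    nlinarith [mul_nonneg hh.le hc]
  have m3 : (-h - b1)*c - (h - b2)*s ≤ (z1 - b1)*c - (z2 - b2)*s := by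
    have t1 : 0 ≤ (z1 + h)*c := mul_nonneg (by linarith) hc
    have t2 : 0 ≤ (h - z2)*s := mul_nonneg (by linarith) hs
    nlinarith [t1, t2]
  have m4 : (-h - b1)*s + (h - b2)*c ≤ (h - b1)*s + (h - b2)*c := by
    nlinarith [mul_nonneg hh.le hs]
  -- forced cert for R+ : k < X(R+)
  have hXRp : k < (h - b1)*c - (h - b2)*s := by
    rcases C.cRp with hA | hA
    · rcases lt_abs.mp hA with hB | hB
      · exact hB
      · linarith [hXm, m2]
    · rcases lt_abs.mp hA with hB | hB
      · linarith
      · linarith [hYzl, m1]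
  -- forced cert for L+ : Y(L+) < -k
  have hYLp : (-h - b1)*s + (h - b2)*c < -k := by
    rcases C.cLp with hA | hA
    · rcases lt_abs.mp hA with hB | hB
      · linarith [m3, hXzu]
      · linarith [hXm]
    · rcases lt_abs.mp hA with hB | hB
      · linarith [m4, hYp]
      · linarith
  -- δ ≤ k (s - c)
  have idRp : ((h-b1)*c - (h-b2)*s)*c + ((h-b1)*s + (h-b2)*c)*s = h - b1 := by
    linear_combination (h - b1) * unit
  have hYRpl : -k ≤ (h - b1)*s + (h - b2)*c := by linarith [hYzl, m1]
  have hds : b1 - h ≤ k*(s - c) := by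
    have q1 := mul_le_mul_of_nonneg_right hXRp.le hc
    have q2 := mul_le_mul_of_nonneg_right hYRpl hs
    nlinarith [q1, q2, idRp]
  have hb2up : b2 ≤ h + k*(c+s) := by linarith [hzf4, hz2u]
  -- the vertex V2 = (b1 + k(c-s), b2 - k(c+s)) of T
  have idL : (-h - b1)*s + (h - b2)*c + k
      = (-h - (b1 + k*(c-s)))*s + (h - (b2 - k*(c+s)))*c := by
    linear_combination (-k) * unit
  rcases le_or_gt (-h) (b2 - k*(c+s)) with hG | hG
  · -- V2 ∈ S : contradiction with vT
    have hFV2lb : -h ≤ b1 + k*(c-s) := by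
      by_contra hcon
      push_neg at hcon
      have t1 : 0 ≤ (-h - (b1 + k*(c-s)))*s := mul_nonneg (by linarith) hs
      have t2 : 0 ≤ (h - (b2 - k*(c+s)))*c := mul_nonneg (by linarith) hc
      linarith [idL, hYLp]
    refine C.vT 1 (-1) sq1 sqm1 ⟨?_, ?_⟩
    · rw [show b1 + k*(1*c + -1*s) = b1 + k*(c-s) by ring, abs_le]
      exact ⟨hFV2lb, by linarith [hds]⟩
    · rw [show b2 + k*(-1*s + -1*c) = b2 - k*(c+s) by ring, abs_le]
      exact ⟨hG, by linarith [hb2up]⟩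
  · -- product case
    have idW1 : ((h-b1)*c - (h-b2)*s) - k
        = (h - (b1 + k*(c-s)))*c - (h - (b2 - k*(c+s)))*s := by
      linear_combination k * unit
    have W1 : (h - (b2 - k*(c+s)))*s < (h - (b1 + k*(c-s)))*c := by
      linarith [idW1, hXRp]
    have W2 : (h - (b2 - k*(c+s)))*c < (h + (b1 + k*(c-s)))*s := by
      linarith [idL, hYLp]
    have hA1 : 0 ≤ (h - (b2 - k*(c+s)))*s := mul_nonneg (by linarith) hs
    have hA2 : 0 ≤ (h - (b2 - k*(c+s)))*c := mul_nonneg (by linarith) hc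
    have P := mul_lt_mul'' W1 W2 hA1 hA2
    have e5 : (h - (b2 - k*(c+s)))*s * ((h - (b2 - k*(c+s)))*c)
        = (c*s)*(h - (b2 - k*(c+s)))^2 := by ring
    have e6 : (h - (b1 + k*(c-s)))*c * ((h + (b1 + k*(c-s)))*s)
        = (c*s)*(h^2 - (b1 + k*(c-s))^2) := by ring
    have P2 : (c*s)*(h - (b2 - k*(c+s)))^2 < (c*s)*(h^2 - (b1 + k*(c-s))^2) := by
      linarith [P, e5, e6]
    have e7 : 0 ≤ c*s := mul_nonneg hc hs
    have e9 : h^2 ≤ (h - (b2 - k*(c+s)))^2 := by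
      nlinarith [mul_pos (show (0:ℝ) < -(b2 - k*(c+s)) by linarith)
        (show (0:ℝ) < 2*h - (b2 - k*(c+s)) by linarith)]
    have e10 := mul_le_mul_of_nonneg_left e9 e7
    have e11 : 0 ≤ (c*s) * (b1 + k*(c-s))^2 := mul_nonneg e7 (sq_nonneg _)
    nlinarith [P2, e10, e11]

/-- Branch: constraints `X ≤ k` and `Y ≥ -k` of T hold on all of S. -/
lemma Cfg.br_mp (C : Cfg h k c s b1 b2 z1 z2) (hc : 0 ≤ c) (hs : 0 ≤ s)
    (hb1 : h < b1)
    (hXp : (h - b1)*c - (-h - b2)*s ≤ k)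
    (hYm : -k ≤ (-h - b1)*s + (-h - b2)*c) : False := by
  obtain ⟨hz1l, hz1u⟩ := abs_le.mp C.z1S
  obtain ⟨hz2l, hz2u⟩ := abs_le.mp C.z2S
  obtain ⟨hXzl, hXzu⟩ := abs_le.mp C.zT1
  obtain ⟨hYzl, hYzu⟩ := abs_le.mp C.zT2
  obtain ⟨hzf1, hzf2, hzf3, hzf4⟩ := C.zfacts hc hs
  have hh := C.hh
  have hk := C.hk
  have unit := C.unit
  have m1 : (z1 - b1)*c - (z2 - b2)*s ≤ (h - b1)*c - (-h - b2)*s := by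
    have t1 : 0 ≤ (h - z1)*c := mul_nonneg (by linarith) hc
    have t2 : 0 ≤ (z2 + h)*s := mul_nonneg (by linarith) hs
    nlinarith [t1, t2]
  have m2 : (-h - b1)*s + (-h - b2)*c ≤ (h - b1)*s + (-h - b2)*c := by
    nlinarith [mul_nonneg hh.le hs]
  have m3 : (-h - b1)*c - (-h - b2)*s ≤ (h - b1)*c - (-h - b2)*s := by
    nlinarith [mul_nonneg hh.le hc]
  have m4 : (-h - b1)*s + (-h - b2)*c ≤ (z1 - b1)*s + (z2 - b2)*c := by
    have t1 : 0 ≤ (z1 + h)*s := mul_nonneg (by linarith) hs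
    have t2 : 0 ≤ (z2 + h)*c := mul_nonneg (by linarith) hc
    nlinarith [t1, t2]
  -- forced cert for R- : k < Y(R-)
  have hYRm : k < (h - b1)*s + (-h - b2)*c := by
    rcases C.cRm with hA | hA
    · rcases lt_abs.mp hA with hB | hB
      · linarith
      · linarith [m1, hXzl]
    · rcases lt_abs.mp hA with hB | hB
      · exact hB
      · linarith [m2, hYm]
  -- forced cert for L- : X(L-) < -k
  have hXLm : (-h - b1)*c - (-h - b2)*s < -k := by
    rcases C.cLm with hA | hA
    · rcases lt_abs.mp hA with hB | hB
      · linarith [m3, hXp]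
      · linarith
    · rcases lt_abs.mp hA with hB | hB
      · linarith [m4, hYzu]
      · linarith [hYm]
  have idRm : ((h-b1)*c - (-h-b2)*s)*c + ((h-b1)*s + (-h-b2)*c)*s = h - b1 := by
    linear_combination (h - b1) * unit
  have hXRml : -k ≤ (h - b1)*c - (-h - b2)*s := by linarith [m1, hXzl]
  have hds : b1 - h ≤ k*(c - s) := by
    have q1 := mul_le_mul_of_nonneg_right hYRm.le hs
    have q2 := mul_le_mul_of_nonneg_right hXRml hc
    nlinarith [q1, q2, idRm]
  have hb2lb : -h - k*(c+s) ≤ b2 := by linarith [hzf4, hz2l]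
  have idL : (-h - b1)*c - (-h - b2)*s + k
      = (-h - (b1 + k*(s-c)))*c - (-h - (b2 + k*(c+s)))*s := by
    linear_combination (-k) * unit
  rcases le_or_gt (b2 + k*(c+s)) h with hG | hG
  · -- V4 ∈ S
    have hFV4lb : -h ≤ b1 + k*(s-c) := by
      by_contra hcon
      push_neg at hcon
      have t1 : 0 ≤ (-h - (b1 + k*(s-c)))*c := mul_nonneg (by linarith) hc
      have t2 : (-h - (b2 + k*(c+s)))*s ≤ 0 := by
        nlinarith [mul_nonneg (show (0:ℝ) ≤ h + (b2 + k*(c+s)) by linarith) hs]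
      linarith [idL, hXLm]
    refine C.vT (-1) 1 sqm1 sq1 ⟨?_, ?_⟩
    · rw [show b1 + k*(-1*c + 1*s) = b1 + k*(s-c) by ring, abs_le]
      exact ⟨hFV4lb, by linarith [hds]⟩
    · rw [show b2 + k*(- -1*s + 1*c) = b2 + k*(c+s) by ring, abs_le]
      exact ⟨by linarith [hb2lb], hG⟩
  · -- product case
    have idW1 : ((h-b1)*s + (-h-b2)*c) - k
        = (h - (b1 + k*(s-c)))*s + (-h - (b2 + k*(c+s)))*c := by
      linear_combination k * unit
    have W1 : (h + (b2 + k*(c+s)))*c < (h - (b1 + k*(s-c)))*s := by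
      linarith [idW1, hYRm]
    have W2 : (h + (b2 + k*(c+s)))*s < (h + (b1 + k*(s-c)))*c := by
      linarith [idL, hXLm]
    have hA1 : 0 ≤ (h + (b2 + k*(c+s)))*c := mul_nonneg (by linarith) hc
    have hA2 : 0 ≤ (h + (b2 + k*(c+s)))*s := mul_nonneg (by linarith) hs
    have P := mul_lt_mul'' W1 W2 hA1 hA2
    have e5 : (h + (b2 + k*(c+s)))*c * ((h + (b2 + k*(c+s)))*s)
        = (c*s)*(h + (b2 + k*(c+s)))^2 := by ring
    have e6 : (h - (b1 + k*(s-c)))*s * ((h + (b1 + k*(s-c)))*c)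
        = (c*s)*(h^2 - (b1 + k*(s-c))^2) := by ring
    have P2 : (c*s)*(h + (b2 + k*(c+s)))^2 < (c*s)*(h^2 - (b1 + k*(s-c))^2) := by
      linarith [P, e5, e6]
    have e7 : 0 ≤ c*s := mul_nonneg hc hs
    have e9 : h^2 ≤ (h + (b2 + k*(c+s)))^2 := by
      nlinarith [mul_pos (show (0:ℝ) < b2 + k*(c+s) by linarith)
        (show (0:ℝ) < 2*h + (b2 + k*(c+s)) by linarith)]
    have e10 := mul_le_mul_of_nonneg_left e9 e7
    have e11 : 0 ≤ (c*s) * (b1 + k*(s-c))^2 := mul_nonneg e7 (sq_nonneg _)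
    nlinarith [P2, e10, e11]

/-- Branch: wedge with both `X(R-) > k` and `Y(R+) > k`. -/
lemma Cfg.br_wpp (C : Cfg h k c s b1 b2 z1 z2) (hc : 0 ≤ c) (hs : 0 ≤ s)
    (hb1 : h < b1)
    (hAXp : k < (h - b1)*c - (-h - b2)*s)
    (hAYp : k < (h - b1)*s + (h - b2)*c)
    (hXm : -k ≤ (-h - b1)*c - (h - b2)*s)
    (hYm : -k ≤ (-h - b1)*s + (-h - b2)*c) : False := by
  have hh := C.hh
  have unit := C.unit
  have idRm : ((h-b1)*c - (-h-b2)*s)*c + ((h-b1)*s + (-h-b2)*c)*s = h - b1 := by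
    linear_combination (h - b1) * unit
  have idRp : ((h-b1)*c - (h-b2)*s)*c + ((h-b1)*s + (h-b2)*c)*s = h - b1 := by
    linear_combination (h - b1) * unit
  have m2 : (-h - b1)*s + (-h - b2)*c ≤ (h - b1)*s + (-h - b2)*c := by
    nlinarith [mul_nonneg hh.le hs]
  have m3 : (-h - b1)*c - (h - b2)*s ≤ (h - b1)*c - (h - b2)*s := by
    nlinarith [mul_nonneg hh.le hc]
  have q1 := mul_le_mul_of_nonneg_right hAXp.le hc
  have q2 : (-k)*s ≤ ((h-b1)*s + (-h-b2)*c)*s :=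
    mul_le_mul_of_nonneg_right (by linarith [m2, hYm]) hs
  have d1 : k*(c - s) ≤ h - b1 := by nlinarith [q1, q2, idRm]
  have q3 := mul_le_mul_of_nonneg_right hAYp.le hs
  have q4 : (-k)*c ≤ ((h-b1)*c - (h-b2)*s)*c :=
    mul_le_mul_of_nonneg_right (by linarith [m3, hXm]) hc
  have d2 : k*(s - c) ≤ h - b1 := by nlinarith [q3, q4, idRp]
  linarith [d1, d2, hb1]

/-- wedge (-,-) in the spanning case. -/
lemma Cfg.wmm_C1 (C : Cfg h k c s b1 b2 z1 z2) (hc : 0 ≤ c) (hs : 0 ≤ s)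
    (hb1 : h < b1) (hspan : b1 + h < k*(c+s))
    (hXp : (h - b1)*c - (-h - b2)*s ≤ k)
    (hYp : (h - b1)*s + (h - b2)*c ≤ k) : False := by
  obtain ⟨hz1l, hz1u⟩ := abs_le.mp C.z1S
  obtain ⟨hz2l, hz2u⟩ := abs_le.mp C.z2S
  obtain ⟨hXzl, hXzu⟩ := abs_le.mp C.zT1
  obtain ⟨hYzl, hYzu⟩ := abs_le.mp C.zT2
  have hh := C.hh
  have hk := C.hk
  have unit := C.unit
  have m1 : (z1 - b1)*s + (z2 - b2)*c ≤ (h - b1)*s + (h - b2)*c := by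
    have t1 : 0 ≤ (h - z1)*s := mul_nonneg (by linarith) hs
    have t2 : 0 ≤ (h - z2)*c := mul_nonneg (by linarith) hc
    nlinarith [t1, t2]
  have m1' : (z1 - b1)*c - (z2 - b2)*s ≤ (h - b1)*c - (-h - b2)*s := by
    have t1 : 0 ≤ (h - z1)*c := mul_nonneg (by linarith) hc
    have t2 : 0 ≤ (z2 + h)*s := mul_nonneg (by linarith) hs
    nlinarith [t1, t2]
  have m5 : (h - b1)*c - (h - b2)*s ≤ (h - b1)*c - (-h - b2)*s := by
    nlinarith [mul_nonneg hh.le hs]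
  have m6 : (h - b1)*s + (-h - b2)*c ≤ (h - b1)*s + (h - b2)*c := by
    nlinarith [mul_nonneg hh.le hc]
  -- forced : X(R+) < -k
  have hXRp : (h - b1)*c - (h - b2)*s < -k := by
    rcases C.cRp with hA | hA
    · rcases lt_abs.mp hA with hB | hB
      · linarith [m5, hXp]
      · linarith
    · rcases lt_abs.mp hA with hB | hB
      · linarith [hYp]
      · linarith [m1, hYzl]
  -- forced : Y(R-) < -k
  have hYRm : (h - b1)*s + (-h - b2)*c < -k := by
    rcases C.cRm with hA | hA
    · rcases lt_abs.mp hA with hB | hB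
      · linarith [hXp]
      · linarith [m1', hXzl]
    · rcases lt_abs.mp hA with hB | hB
      · linarith [m6, hYp]
      · exact by linarith
  have idW1 : ((h-b1)*c - (h-b2)*s) + k
      = (h - (b1 - k*(c+s)))*c - (h - (b2 + k*(s-c)))*s := by
    linear_combination (-k) * unit
  have idW2 : ((h-b1)*s + (-h-b2)*c) + k
      = (h - (b1 - k*(c+s)))*s + (-h - (b2 + k*(s-c)))*c := by
    linear_combination (-k) * unit
  have W1 : (h - (b1 - k*(c+s)))*c < (h - (b2 + k*(s-c)))*s := by
    linarith [idW1, hXRp]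
  have W2 : (h - (b1 - k*(c+s)))*s < (h + (b2 + k*(s-c)))*c := by
    linarith [idW2, hYRm]
  have hA0 : 0 < h - (b1 - k*(c+s)) := by linarith
  have P := mul_lt_mul'' W1 W2 (mul_nonneg hA0.le hc) (mul_nonneg hA0.le hs)
  have e5 : (h - (b1 - k*(c+s)))*c * ((h - (b1 - k*(c+s)))*s)
      = (c*s)*(h - (b1 - k*(c+s)))^2 := by ring
  have e6 : (h - (b2 + k*(s-c)))*s * ((h + (b2 + k*(s-c)))*c)
      = (c*s)*(h^2 - (b2 + k*(s-c))^2) := by ring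
  have P2 : (c*s)*(h - (b1 - k*(c+s)))^2 < (c*s)*(h^2 - (b2 + k*(s-c))^2) := by
    linarith [P, e5, e6]
  have e7 : 0 ≤ c*s := mul_nonneg hc hs
  have e9 : h^2 ≤ (h - (b1 - k*(c+s)))^2 := by
    nlinarith [mul_pos (show (0:ℝ) < k*(c+s) - b1 by linarith)
      (show (0:ℝ) < 2*h + (k*(c+s) - b1) by linarith)]
  have e10 := mul_le_mul_of_nonneg_left e9 e7
  have e11 : 0 ≤ (c*s) * (b2 + k*(s-c))^2 := mul_nonneg e7 (sq_nonneg _)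
  nlinarith [P2, e10, e11]

/-- wedge (-,-) in the C2a case. -/
lemma Cfg.wmm_C2a (C : Cfg h k c s b1 b2 z1 z2) (hc : 0 ≤ c) (hs : 0 ≤ s)
    (hb1 : h < b1) (hC2 : h < b2 + k*(s-c))
    (hXp : (h - b1)*c - (-h - b2)*s ≤ k)
    (hYp : (h - b1)*s + (h - b2)*c ≤ k) : False := by
  obtain ⟨hz1l, hz1u⟩ := abs_le.mp C.z1S
  obtain ⟨hz2l, hz2u⟩ := abs_le.mp C.z2S
  obtain ⟨hXzl, hXzu⟩ := abs_le.mp C.zT1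
  obtain ⟨hYzl, hYzu⟩ := abs_le.mp C.zT2
  obtain ⟨hzf1, hzf2, hzf3, hzf4⟩ := C.zfacts hc hs
  have hh := C.hh
  have hk := C.hk
  have unit := C.unit
  have m1 : (z1 - b1)*s + (z2 - b2)*c ≤ (h - b1)*s + (h - b2)*c := by
    have t1 : 0 ≤ (h - z1)*s := mul_nonneg (by linarith) hs
    have t2 : 0 ≤ (h - z2)*c := mul_nonneg (by linarith) hc
    nlinarith [t1, t2]
  have m5 : (h - b1)*c - (h - b2)*s ≤ (h - b1)*c - (-h - b2)*s := by
    nlinarith [mul_nonneg hh.le hs]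
  have hXRp : (h - b1)*c - (h - b2)*s < -k := by
    rcases C.cRp with hA | hA
    · rcases lt_abs.mp hA with hB | hB
      · linarith [m5, hXp]
      · linarith
    · rcases lt_abs.mp hA with hB | hB
      · linarith [hYp]
      · linarith [m1, hYzl]
  have idW1 : ((h-b1)*c - (h-b2)*s) + k
      = (h - (b1 - k*(c+s)))*c - (h - (b2 + k*(s-c)))*s := by
    linear_combination (-k) * unit
  have t1 : 0 ≤ (h - (b1 - k*(c+s)))*c := mul_nonneg (by linarith [hzf1, hz1u]) hc
  have t2 : (h - (b2 + k*(s-c)))*s ≤ 0 := by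
    nlinarith [mul_nonneg (show (0:ℝ) ≤ (b2 + k*(s-c)) - h by linarith) hs]
  linarith [idW1, hXRp, t1, t2]

lemma Cfg.hc1 (C : Cfg h k c s b1 b2 z1 z2) (hc : 0 ≤ c) : c ≤ 1 := by
  nlinarith [C.unit, sq_nonneg s, sq_nonneg (c-1)]

lemma Cfg.hs1 (C : Cfg h k c s b1 b2 z1 z2) (hs : 0 ≤ s) : s ≤ 1 := by
  nlinarith [C.unit, sq_nonneg c, sq_nonneg (s-1)]

lemma Cfg.hcs1 (C : Cfg h k c s b1 b2 z1 z2) (hc : 0 ≤ c) (hs : 0 ≤ s) : 1 ≤ c + s := by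
  nlinarith [mul_nonneg hc (sub_nonneg.mpr (C.hc1 hc)),
    mul_nonneg hs (sub_nonneg.mpr (C.hs1 hs)), C.unit]

/-- spanning plus narrow width is impossible -/
lemma Cfg.wide (C : Cfg h k c s b1 b2 z1 z2) (hc : 0 ≤ c) (hs : 0 ≤ s)
    (hb1 : h < b1) (hspan : b1 + h < k*(c+s)) (hhk : k < h*(c+s)) : False := by
  have hh := C.hh
  have unit := C.unit
  have hcs1 := C.hcs1 hc hs
  have hq : k*(c+s) < h*(c+s)*(c+s) := by
    have := mul_lt_mul_of_pos_right hhk (show (0:ℝ) < c+s by linarith)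
    linarith
  have h2 : (c+s)^2 ≤ 2 := by nlinarith [sq_nonneg (c-s), unit]
  have hq2 : h*(c+s)*(c+s) ≤ 2*h := by nlinarith [mul_le_mul_of_nonneg_left h2 hh.le]
  linarith

lemma Cfg.bothX (C : Cfg h k c s b1 b2 z1 z2) (hc : 0 ≤ c) (hs : 0 ≤ s)
    (hb1 : h < b1) (hspan : b1 + h < k*(c+s))
    (hXm : (-h - b1)*c - (h - b2)*s < -k)
    (hXp : k < (h - b1)*c - (-h - b2)*s) : False := by
  have e : ((h-b1)*c - (-h-b2)*s) - ((-h-b1)*c - (h-b2)*s) = 2*(h*(c+s)) := by ring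
  exact C.wide hc hs hb1 hspan (by linarith)

lemma Cfg.bothY (C : Cfg h k c s b1 b2 z1 z2) (hc : 0 ≤ c) (hs : 0 ≤ s)
    (hb1 : h < b1) (hspan : b1 + h < k*(c+s))
    (hYm : (-h - b1)*s + (-h - b2)*c < -k)
    (hYp : k < (h - b1)*s + (h - b2)*c) : False := by
  have e : ((h-b1)*s + (h-b2)*c) - ((-h-b1)*s + (-h-b2)*c) = 2*(h*(c+s)) := by ring
  exact C.wide hc hs hb1 hspan (by linarith)

lemma Cfg.AYp_C2a (C : Cfg h k c s b1 b2 z1 z2) (hc : 0 ≤ c) (hs : 0 ≤ s)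
    (hb1 : h < b1) (hC2 : h < b2 + k*(s-c))
    (hYp : k < (h - b1)*s + (h - b2)*c) : False := by
  have hk := C.hk
  have unit := C.unit
  have uk : k*c^2 + k*s^2 = k := by linear_combination k * unit
  have t1 : (h-b1)*s ≤ 0 := by nlinarith [mul_nonneg (show (0:ℝ) ≤ b1 - h by linarith) hs]
  have t2 := mul_le_mul_of_nonneg_right (show k*(c-s) ≤ b2 - h by linarith) hc
  have q := mul_le_mul_of_nonneg_left (two_mul_le_add_sq c s) hk.le
  have t3 : 0 ≤ k*c^2 := mul_nonneg hk.le (sq_nonneg c)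
  nlinarith [t1, t2, q, uk, t3, hYp]

lemma Cfg.bothX_C2a (C : Cfg h k c s b1 b2 z1 z2) (hc : 0 ≤ c) (hs : 0 ≤ s)
    (hb1 : h < b1) (hC2 : h < b2 + k*(s-c))
    (hXm : (-h - b1)*c - (h - b2)*s < -k)
    (hXp : k < (h - b1)*c - (-h - b2)*s) : False := by
  obtain ⟨hz1l, hz1u⟩ := abs_le.mp C.z1S
  obtain ⟨hz2l, hz2u⟩ := abs_le.mp C.z2S
  obtain ⟨hYzl, hYzu⟩ := abs_le.mp C.zT2
  obtain ⟨hzf1, hzf2, hzf3, hzf4⟩ := C.zfacts hc hs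
  have hh := C.hh
  have hk := C.hk
  have unit := C.unit
  have uk : k*c^2 + k*s^2 = k := by linear_combination k * unit
  have hcs1 := C.hcs1 hc hs
  have hhk : k < h*(c+s) := by
    have e : ((h-b1)*c - (-h-b2)*s) - ((-h-b1)*c - (h-b2)*s) = 2*(h*(c+s)) := by ring
    linarith
  have hm2h : k*(c+s) < 2*h := by
    have hq : k*(c+s) < h*(c+s)*(c+s) := by
      have := mul_lt_mul_of_pos_right hhk (show (0:ℝ) < c+s by linarith)
      linarith
    have h2 : (c+s)^2 ≤ 2 := by nlinarith [sq_nonneg (c-s), unit]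
    nlinarith [mul_le_mul_of_nonneg_left h2 hh.le]
  have hb2up : b2 ≤ h + k*(c+s) := by linarith
  rcases C.cRp with hA | hA
  · rcases lt_abs.mp hA with hXRp | hXRp
    · -- k < X(R+) : split on the vertex V2 of T
      have t1' : k + (b1-h)*c < (b2-h)*s := by nlinarith [hXRp]
      rcases C.wV2 with hB | hB
      · rcases lt_abs.mp hB with hF | hF
        · have t3 : k*(s-c) < b1 - h := by linarith
          have t2 := mul_le_mul_of_nonneg_right (show b2 - h ≤ k*(c+s) by linarith) hs
          have t4 := mul_le_mul_of_nonneg_right t3.le hc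
          nlinarith [t1', t2, t4, uk]
        · have t5 : 0 ≤ k*c := mul_nonneg hk.le hc
          have t6 : k*s ≤ k*(c+s) := by nlinarith [t5]
          linarith [hm2h, t6]
      · rcases lt_abs.mp hB with hG | hG
        · linarith
        · have t7 : (b2-h)*s ≤ 0 := by
            nlinarith [mul_nonneg (show (0:ℝ) ≤ h - b2 by linarith) hs]
          have t8 : 0 ≤ (b1-h)*c := mul_nonneg (by linarith) hc
          linarith [t1', t7, t8]
    · -- X(R+) < -k
      have hXRpm : (h-b1)*c - (h-b2)*s < -k := by linarith
      have t2 := mul_le_mul_of_nonneg_right (show k*(c-s) ≤ b2 - h by linarith) hs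
      have t5 := mul_le_mul_of_nonneg_right (show b1 - h ≤ k*(c+s) by linarith) hc
      nlinarith [hXRpm, t2, t5, uk]
  · rcases lt_abs.mp hA with hYRp | hYRp
    · exact C.AYp_C2a hc hs hb1 hC2 hYRp
    · have m1 : (z1 - b1)*s + (z2 - b2)*c ≤ (h - b1)*s + (h - b2)*c := by
        have t1 : 0 ≤ (h - z1)*s := mul_nonneg (by linarith) hs
        have t2 : 0 ≤ (h - z2)*c := mul_nonneg (by linarith) hc
        nlinarith [t1, t2]
      linarith [m1, hYzl]

lemma Cfg.caseC2a (C : Cfg h k c s b1 b2 z1 z2) (hc : 0 ≤ c) (hs : 0 ≤ s)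
    (hb1 : h < b1) (hC2 : h < b2 + k*(s-c)) : False := by
  rcases le_or_gt ((h-b1)*s + (h-b2)*c) k with hYp | hYp
  · rcases le_or_gt (-k) ((-h-b1)*c - (h-b2)*s) with hXm | hXm
    · exact C.br_pm hc hs hb1 hXm hYp
    · rcases le_or_gt ((h-b1)*c - (-h-b2)*s) k with hXp | hXp
      · exact C.wmm_C2a hc hs hb1 hC2 hXp hYp
      · exact C.bothX_C2a hc hs hb1 hC2 hXm hXp
  · exact C.AYp_C2a hc hs hb1 hC2 hYp

lemma Cfg.caseC1 (C : Cfg h k c s b1 b2 z1 z2) (hc : 0 ≤ c) (hs : 0 ≤ s)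
    (hb1 : h < b1) (hspan : b1 + h < k*(c+s)) : False := by
  rcases le_or_gt (-k) ((-h-b1)*c - (h-b2)*s) with hXm | hXm
  · rcases le_or_gt ((h-b1)*s + (h-b2)*c) k with hYp | hYp
    · exact C.br_pm hc hs hb1 hXm hYp
    · rcases le_or_gt (-k) ((-h-b1)*s + (-h-b2)*c) with hYm | hYm
      · rcases le_or_gt ((h-b1)*c - (-h-b2)*s) k with hXp | hXp
        · exact C.br_mp hc hs hb1 hXp hYm
        · exact C.br_wpp hc hs hb1 hXp hYp hXm hYm
      · exact C.bothY hc hs hb1 hspan hYm hYp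
  · rcases le_or_gt ((h-b1)*c - (-h-b2)*s) k with hXp | hXp
    · rcases le_or_gt ((h-b1)*s + (h-b2)*c) k with hYp | hYp
      · exact C.wmm_C1 hc hs hb1 hspan hXp hYp
      · rcases le_or_gt (-k) ((-h-b1)*s + (-h-b2)*c) with hYm | hYm
        · exact C.br_mp hc hs hb1 hXp hYm
        · exact C.bothY hc hs hb1 hspan hYm hYp
    · exact C.bothX hc hs hb1 hspan hXm hXp

lemma Cfg.core (C : Cfg h k c s b1 b2 z1 z2) (hc : 0 ≤ c) (hs : 0 ≤ s) : b1 ≤ h := by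
  by_contra hb1'
  push_neg at hb1'
  rcases C.wV1 with hA | hA
  · rcases lt_abs.mp hA with hB | hB
    · have h1 := (C.zfacts hc hs).1
      have h2 := (abs_le.mp C.z1S).2
      linarith
    · exact C.caseC1 hc hs hb1' (by linarith)
  · rcases lt_abs.mp hA with hB | hB
    · exact C.caseC2a hc hs hb1' (by linarith)
    · exact (C.reflect).caseC2a hs hc hb1' (by linarith)

lemma Cfg.b1_le (C : Cfg h k c s b1 b2 z1 z2) : b1 ≤ h := by
  rcases le_or_gt 0 c with hc | hc <;> rcases le_or_gt 0 s with hs | hs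
  · exact C.core hc hs
  · exact (C.rotT.rotT.rotT).core (by linarith) (by linarith)
  · exact (C.rotT).core hs (by linarith)
  · exact (C.rotT.rotT).core (by linarith) (by linarith)

lemma Cfg.center (C : Cfg h k c s b1 b2 z1 z2) :
    |b1| ≤ h ∧ |b2| ≤ h ∧ |(-b1*c + b2*s)| ≤ k ∧ |(-b1*s - b2*c)| ≤ k := by
  have h1 : b1 ≤ h := C.b1_le
  have h2 : -b1 ≤ h := (C.negu).b1_le
  have h3 : b2 ≤ h := (C.rotS).b1_le
  have h4 : -b2 ≤ h := (C.rotS.negu).b1_le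
  have h5 : -b1*c + b2*s ≤ k := (C.swap).b1_le
  have h6 : -(-b1*c + b2*s) ≤ k := by
    have := (C.swap.negu).b1_le
    linarith
  have h7 : -b1*s - b2*c ≤ k := (C.swap.rotS).b1_le
  have h8 : -(-b1*s - b2*c) ≤ k := by
    have := (C.swap.rotS.negu).b1_le
    linarith
  exact ⟨abs_le.mpr ⟨by linarith, h1⟩, abs_le.mpr ⟨by linarith, h3⟩,
    abs_le.mpr ⟨by linarith, h5⟩, abs_le.mpr ⟨by linarith, h7⟩⟩


/-! ### points and vertices -/

def mkPt (x y : ℝ) : Pt := (WithLp.equiv 2 (Fin 2 → ℝ)).symm ![x, y]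

@[simp] lemma mkPt_zero (x y : ℝ) : mkPt x y 0 = x := rfl
@[simp] lemma mkPt_one (x y : ℝ) : mkPt x y 1 = y := rfl

def sqVtx (a : Pt) (θ h σ τ : ℝ) : Pt :=
  mkPt (a 0 + σ*h*Real.cos θ + τ*h*Real.sin θ) (a 1 + σ*h*Real.sin θ - τ*h*Real.cos θ)

lemma form1_self (a : Pt) (θ : ℝ) : sqForm1 a θ a = 0 := by simp [sqForm1]

lemma form2_self (a : Pt) (θ : ℝ) : sqForm2 a θ a = 0 := by simp [sqForm2]

lemma form1_vtx_self (a : Pt) (θ h σ τ : ℝ) :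
    sqForm1 a θ (sqVtx a θ h σ τ) = σ*h := by
  simp only [sqForm1, sqVtx, mkPt_zero, mkPt_one]
  linear_combination (σ*h) * (Real.sin_sq_add_cos_sq θ)

lemma form2_vtx_self (a : Pt) (θ h σ τ : ℝ) :
    sqForm2 a θ (sqVtx a θ h σ τ) = τ*h := by
  simp only [sqForm2, sqVtx, mkPt_zero, mkPt_one]
  linear_combination (τ*h) * (Real.sin_sq_add_cos_sq θ)

lemma mem_sqSet {a : Pt} {θ sl : ℝ} {x : Pt} :
    x ∈ sqSet a θ sl ↔ |sqForm1 a θ x| ≤ sl/2 ∧ |sqForm2 a θ x| ≤ sl/2 := Iff.rfl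

/-- relation of coordinate forms in two frames -/
lemma form1_rel (a : Pt) (α : ℝ) (b : Pt) (β : ℝ) (x : Pt) :
    sqForm1 b β x = (sqForm1 a α x - sqForm1 a α b) * Real.cos (α - β)
      - (sqForm2 a α x - sqForm2 a α b) * Real.sin (β - α) := by
  simp only [sqForm1, sqForm2, Real.cos_sub, Real.sin_sub]
  linear_combination (-(Real.cos β * (x 0 - b 0) + Real.sin β * (x 1 - b 1)))
    * (Real.sin_sq_add_cos_sq α)

lemma form2_rel (a : Pt) (α : ℝ) (b : Pt) (β : ℝ) (x : Pt) :
    sqForm2 b β x = (sqForm1 a α x - sqForm1 a α b) * Real.sin (β - α)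
      + (sqForm2 a α x - sqForm2 a α b) * Real.cos (α - β) := by
  simp only [sqForm1, sqForm2, Real.cos_sub, Real.sin_sub]
  linear_combination (-(Real.sin β * (x 0 - b 0) - Real.cos β * (x 1 - b 1)))
    * (Real.sin_sq_add_cos_sq α)

/-- reconstruction of coordinates from forms -/
lemma coord_rel (a : Pt) (α : ℝ) (x : Pt) :
    x 0 = a 0 + (sqForm1 a α x)*Real.cos α + (sqForm2 a α x)*Real.sin α ∧
    x 1 = a 1 + (sqForm1 a α x)*Real.sin α - (sqForm2 a α x)*Real.cos α := by
  constructor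
  · simp only [sqForm1, sqForm2]
    linear_combination (x 0 - a 0) - (x 0 - a 0) * (Real.sin_sq_add_cos_sq α)
  · simp only [sqForm1, sqForm2]
    linear_combination (x 1 - a 1) - (x 1 - a 1) * (Real.sin_sq_add_cos_sq α)

/-! ### canonical data of a square -/

def sqData (S : Set Pt) : Pt × ℝ × ℝ :=
  if h : IsSquareSet S then
    ⟨h.choose, h.choose_spec.choose, h.choose_spec.choose_spec.choose⟩
  else ⟨0, 0, 1⟩

def ctrOf (S : Set Pt) : Pt := (sqData S).1
def angOf (S : Set Pt) : ℝ := (sqData S).2.1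
def sideOf (S : Set Pt) : ℝ := (sqData S).2.2

lemma sqData_spec {S : Set Pt} (hS : IsSquareSet S) :
    0 < sideOf S ∧ S = sqSet (ctrOf S) (angOf S) (sideOf S) := by
  have h1 := hS.choose_spec.choose_spec.choose_spec
  constructor
  · show 0 < (sqData S).2.2
    rw [sqData, dif_pos hS]
    exact h1.1
  · show S = sqSet (sqData S).1 (sqData S).2.1 (sqData S).2.2
    rw [sqData, dif_pos hS]
    exact h1.2

def vertsOf (S : Set Pt) : Finset Pt :=
  {sqVtx (ctrOf S) (angOf S) (sideOf S/2) 1 1,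
   sqVtx (ctrOf S) (angOf S) (sideOf S/2) 1 (-1),
   sqVtx (ctrOf S) (angOf S) (sideOf S/2) (-1) 1,
   sqVtx (ctrOf S) (angOf S) (sideOf S/2) (-1) (-1)}

lemma card_vertsOf (S : Set Pt) : (vertsOf S).card ≤ 4 := by
  classical
  refine le_trans (Finset.card_insert_le _ _) ?_
  have h2 := Finset.card_insert_le (sqVtx (ctrOf S) (angOf S) (sideOf S/2) 1 (-1))
    ({sqVtx (ctrOf S) (angOf S) (sideOf S/2) (-1) 1,
      sqVtx (ctrOf S) (angOf S) (sideOf S/2) (-1) (-1)} : Finset Pt)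
  have h3 := Finset.card_insert_le (sqVtx (ctrOf S) (angOf S) (sideOf S/2) (-1) 1)
    ({sqVtx (ctrOf S) (angOf S) (sideOf S/2) (-1) (-1)} : Finset Pt)
  simp only [Finset.card_singleton] at h3
  omega

lemma vtx_mem_self {S : Set Pt} (hS : IsSquareSet S) {σ τ : ℝ}
    (hσ : σ = 1 ∨ σ = -1) (hτ : τ = 1 ∨ τ = -1) :
    sqVtx (ctrOf S) (angOf S) (sideOf S/2) σ τ ∈ S := by
  obtain ⟨hpos, heq⟩ := sqData_spec hS
  have hmem : sqVtx (ctrOf S) (angOf S) (sideOf S/2) σ τ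
      ∈ sqSet (ctrOf S) (angOf S) (sideOf S) := by
    rw [mem_sqSet, form1_vtx_self, form2_vtx_self]
    have h1 : |σ| = 1 := by rcases hσ with h | h <;> simp [h]
    have h2 : |τ| = 1 := by rcases hτ with h | h <;> simp [h]
    rw [abs_mul, abs_mul, h1, h2]
    simp only [one_mul]
    rw [abs_of_pos (by linarith : (0:ℝ) < sideOf S / 2)]
    exact ⟨le_refl _, le_refl _⟩
  rwa [← heq] at hmem

lemma vertsOf_mem_self {S : Set Pt} (hS : IsSquareSet S) :
    ∀ v ∈ vertsOf S, v ∈ S := by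
  intro v hv
  simp only [vertsOf, Finset.mem_insert, Finset.mem_singleton] at hv
  rcases hv with h | h | h | h <;> rw [h] <;>
    exact vtx_mem_self hS (by norm_num) (by norm_num)

lemma ctrOf_mem_self {S : Set Pt} (hS : IsSquareSet S) : ctrOf S ∈ S := by
  obtain ⟨hpos, heq⟩ := sqData_spec hS
  have hmem : ctrOf S ∈ sqSet (ctrOf S) (angOf S) (sideOf S) := by
    rw [mem_sqSet, form1_self, form2_self]
    constructor <;> · rw [abs_zero]; linarith
  rwa [← heq] at hmem

end SquaresProof

namespace SquaresProof

lemma sq_eq_pm {σ : ℝ} (h : σ^2 = 1) : σ = 1 ∨ σ = -1 := by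
  have h' : (σ - 1)*(σ + 1) = 0 := by linear_combination h
  rcases mul_eq_zero.mp h' with h'' | h''
  · left; linarith
  · right; linarith

lemma form1_vtx_rel (a : Pt) (α : ℝ) (b : Pt) (β : ℝ) (h' σ τ : ℝ) :
    sqForm1 a α (sqVtx b β h' σ τ)
      = sqForm1 a α b + h'*(σ*Real.cos (α - β) + τ*Real.sin (β - α)) := by
  simp only [sqForm1, sqVtx, mkPt_zero, mkPt_one, Real.cos_sub, Real.sin_sub]
  ring

lemma form2_vtx_rel (a : Pt) (α : ℝ) (b : Pt) (β : ℝ) (h' σ τ : ℝ) :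
    sqForm2 a α (sqVtx b β h' σ τ)
      = sqForm2 a α b + h'*(-σ*Real.sin (β - α) + τ*Real.cos (α - β)) := by
  simp only [sqForm2, sqVtx, mkPt_zero, mkPt_one, Real.cos_sub, Real.sin_sub]
  ring

lemma mem_vertsOf {S : Set Pt} {σ τ : ℝ} (hσ : σ = 1 ∨ σ = -1) (hτ : τ = 1 ∨ τ = -1) :
    sqVtx (ctrOf S) (angOf S) (sideOf S/2) σ τ ∈ vertsOf S := by
  simp only [vertsOf, Finset.mem_insert, Finset.mem_singleton]
  rcases hσ with rfl | rfl <;> rcases hτ with rfl | rfl <;> simp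

lemma form1_rel_vtx (a : Pt) (α : ℝ) (b : Pt) (β : ℝ) (h' σ τ : ℝ) :
    sqForm1 b β (sqVtx a α h' σ τ)
      = (σ*h' - sqForm1 a α b)*Real.cos (α - β) - (τ*h' - sqForm2 a α b)*Real.sin (β - α) := by
  rw [form1_rel a α, form1_vtx_self, form2_vtx_self]

lemma form2_rel_vtx (a : Pt) (α : ℝ) (b : Pt) (β : ℝ) (h' σ τ : ℝ) :
    sqForm2 b β (sqVtx a α h' σ τ)
      = (σ*h' - sqForm1 a α b)*Real.sin (β - α) + (τ*h' - sqForm2 a α b)*Real.cos (α - β) := by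
  rw [form2_rel a α, form1_vtx_self, form2_vtx_self]

lemma crossing {S T : Set Pt} (hS : IsSquareSet S) (hT : IsSquareSet T)
    (hz : (S ∩ T).Nonempty) :
    (∃ v ∈ vertsOf S, v ∈ T) ∨ (∃ v ∈ vertsOf T, v ∈ S) ∨
      (ctrOf S ∈ T ∧ ctrOf T ∈ S) := by
  by_cases h1 : ∃ v ∈ vertsOf S, v ∈ T
  · exact Or.inl h1
  by_cases h2 : ∃ v ∈ vertsOf T, v ∈ S
  · exact Or.inr (Or.inl h2)
  push_neg at h1 h2
  obtain ⟨z, hzS, hzT⟩ := hz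
  obtain ⟨hsl, hSeq⟩ := sqData_spec hS
  obtain ⟨htl, hTeq⟩ := sqData_spec hT
  have hzS' : |sqForm1 (ctrOf S) (angOf S) z| ≤ sideOf S/2 ∧
      |sqForm2 (ctrOf S) (angOf S) z| ≤ sideOf S/2 := by rw [hSeq] at hzS; exact hzS
  have hzT' : |sqForm1 (ctrOf T) (angOf T) z| ≤ sideOf T/2 ∧
      |sqForm2 (ctrOf T) (angOf T) z| ≤ sideOf T/2 := by rw [hTeq] at hzT; exact hzT
  have CC : Cfg (sideOf S/2) (sideOf T/2)
      (Real.cos (angOf S - angOf T)) (Real.sin (angOf T - angOf S))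
      (sqForm1 (ctrOf S) (angOf S) (ctrOf T)) (sqForm2 (ctrOf S) (angOf S) (ctrOf T))
      (sqForm1 (ctrOf S) (angOf S) z) (sqForm2 (ctrOf S) (angOf S) z) := by
    constructor
    · linarith
    · linarith
    · have e : Real.cos (angOf S - angOf T) = Real.cos (angOf T - angOf S) := by
        rw [show angOf S - angOf T = -(angOf T - angOf S) by ring, Real.cos_neg]
      rw [e]
      have := Real.sin_sq_add_cos_sq (angOf T - angOf S)
      linarith
    · exact hzS'.1
    · exact hzS'.2
    · rw [← form1_rel]; exact hzT'.1
    · rw [← form2_rel]; exact hzT'.2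
    · intro σ τ hσ hτ hcontra
      obtain ⟨u1, u2⟩ := hcontra
      refine h2 (sqVtx (ctrOf T) (angOf T) (sideOf T/2) σ τ)
        (mem_vertsOf (sq_eq_pm hσ) (sq_eq_pm hτ)) ?_
      have hmem : sqVtx (ctrOf T) (angOf T) (sideOf T/2) σ τ
          ∈ sqSet (ctrOf S) (angOf S) (sideOf S) := by
        rw [mem_sqSet, form1_vtx_rel, form2_vtx_rel]
        exact ⟨u1, u2⟩
      rwa [← hSeq] at hmem
    · intro σ τ hσ hτ hcontra
      obtain ⟨u1, u2⟩ := hcontra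
      refine h1 (sqVtx (ctrOf S) (angOf S) (sideOf S/2) σ τ)
        (mem_vertsOf (sq_eq_pm hσ) (sq_eq_pm hτ)) ?_
      have hmem : sqVtx (ctrOf S) (angOf S) (sideOf S/2) σ τ
          ∈ sqSet (ctrOf T) (angOf T) (sideOf T) := by
        rw [mem_sqSet, form1_rel_vtx (ctrOf S) (angOf S), form2_rel_vtx (ctrOf S) (angOf S)]
        exact ⟨u1, u2⟩
      rwa [← hTeq] at hmem
  obtain ⟨e1, e2, e3, e4⟩ := CC.center
  refine Or.inr (Or.inr ⟨?_, ?_⟩)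
  · have g1 : sqForm1 (ctrOf T) (angOf T) (ctrOf S)
        = -sqForm1 (ctrOf S) (angOf S) (ctrOf T)*Real.cos (angOf S - angOf T)
          + sqForm2 (ctrOf S) (angOf S) (ctrOf T)*Real.sin (angOf T - angOf S) := by
      rw [form1_rel (ctrOf S) (angOf S), form1_self, form2_self]; ring
    have g2 : sqForm2 (ctrOf T) (angOf T) (ctrOf S)
        = -sqForm1 (ctrOf S) (angOf S) (ctrOf T)*Real.sin (angOf T - angOf S)
          - sqForm2 (ctrOf S) (angOf S) (ctrOf T)*Real.cos (angOf S - angOf T) := by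
      rw [form2_rel (ctrOf S) (angOf S), form1_self, form2_self]; ring
    have hmem : ctrOf S ∈ sqSet (ctrOf T) (angOf T) (sideOf T) := by
      rw [mem_sqSet, g1, g2]
      exact ⟨e3, e4⟩
    rwa [← hTeq] at hmem
  · have hmem : ctrOf T ∈ sqSet (ctrOf S) (angOf S) (sideOf S) := by
      rw [mem_sqSet]
      exact ⟨e1, e2⟩
    rwa [← hSeq] at hmem

end SquaresProof

namespace SquaresProof

def ell (ε : ℝ) (p : Pt) : ℝ := p 1 + ε * p 0

lemma ell_decomp (ε : ℝ) (a : Pt) (α : ℝ) (x : Pt) :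
    ell ε x = ell ε a + (sqForm1 a α x) * (Real.sin α + ε*Real.cos α)
      + (sqForm2 a α x) * (-Real.cos α + ε*Real.sin α) := by
  obtain ⟨c0, c1⟩ := coord_rel a α x
  simp only [ell]
  rw [c0, c1]
  ring

lemma ell_vtx (ε : ℝ) (a : Pt) (α h' σ τ : ℝ) :
    ell ε (sqVtx a α h' σ τ) = ell ε a + (σ*h') * (Real.sin α + ε*Real.cos α)
      + (τ*h') * (-Real.cos α + ε*Real.sin α) := by
  rw [ell_decomp ε a α, form1_vtx_self, form2_vtx_self]

/-- minimization of a single term -/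
lemma min_term {L F hl : ℝ} (hL : L ≠ 0) (hF : |F| ≤ hl) :
    (if 0 < L then (-1:ℝ) else 1)*hl*L ≤ F*L ∧
      (F*L = (if 0 < L then (-1:ℝ) else 1)*hl*L → F = (if 0 < L then (-1:ℝ) else 1)*hl) := by
  obtain ⟨hF1, hF2⟩ := abs_le.mp hF
  rcases lt_or_gt_of_ne hL with hneg | hpos
  · rw [if_neg (not_lt.mpr hneg.le)]
    constructor
    · nlinarith
    · intro he
      have h0 : (hl - F)*L = 0 := by linarith [he]
      rcases mul_eq_zero.mp h0 with h' | h'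
      · linarith
      · exact absurd h' hL
  · rw [if_pos hpos]
    constructor
    · nlinarith
    · intro he
      have h0 : (F + hl)*L = 0 := by linarith [he]
      rcases mul_eq_zero.mp h0 with h' | h'
      · linarith
      · exact absurd h' hL

lemma pt_ext {x y : Pt} (h0 : x 0 = y 0) (h1 : x 1 = y 1) : x = y := by
  ext i
  fin_cases i
  · exact h0
  · exact h1

lemma ell_min_vertex (ε : ℝ) (a : Pt) (α sl : ℝ)
    (hLu : Real.sin α + ε*Real.cos α ≠ 0) (hLw : -Real.cos α + ε*Real.sin α ≠ 0) :
    ∃ σ τ : ℝ, (σ = 1 ∨ σ = -1) ∧ (τ = 1 ∨ τ = -1) ∧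
      (∀ x ∈ sqSet a α sl, ell ε (sqVtx a α (sl/2) σ τ) ≤ ell ε x) ∧
      (∀ x ∈ sqSet a α sl, ell ε x = ell ε (sqVtx a α (sl/2) σ τ) →
        x = sqVtx a α (sl/2) σ τ) := by
  set Lu := Real.sin α + ε*Real.cos α with hLu_def
  set Lw := -Real.cos α + ε*Real.sin α with hLw_def
  refine ⟨if 0 < Lu then (-1:ℝ) else 1, if 0 < Lw then (-1:ℝ) else 1,
    (by split <;> simp), (by split <;> simp), ?_, ?_⟩
  · intro x hx
    obtain ⟨hx1, hx2⟩ := (mem_sqSet).mp hx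
    have t1 := (min_term hLu hx1).1
    have t2 := (min_term hLw hx2).1
    rw [ell_vtx, ell_decomp ε a α x]
    linarith
  · intro x hx he
    obtain ⟨hx1, hx2⟩ := (mem_sqSet).mp hx
    have t1 := min_term hLu hx1
    have t2 := min_term hLw hx2
    rw [ell_vtx, ell_decomp ε a α x] at he
    have e1 : sqForm1 a α x = (if 0 < Lu then (-1:ℝ) else 1)*(sl/2) := by
      apply (t1.2)
      linarith [t1.1, t2.1]
    have e2 : sqForm2 a α x = (if 0 < Lw then (-1:ℝ) else 1)*(sl/2) := by
      apply (t2.2)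
      linarith [t1.1, t2.1]
    obtain ⟨c0, c1⟩ := coord_rel a α x
    apply pt_ext
    · rw [c0, e1, e2]
      simp only [sqVtx, mkPt_zero]
      try ring
    · rw [c1, e1, e2]
      simp only [sqVtx, mkPt_one]
      try ring

/-- a direction that is generic for all members of the family -/
lemma generic_eps (F' : Finset (Set Pt)) :
    ∃ ε : ℝ, ∀ S ∈ F', (Real.sin (angOf S) + ε*Real.cos (angOf S) ≠ 0) ∧
      (-Real.cos (angOf S) + ε*Real.sin (angOf S) ≠ 0) := by
  classical
  have hsub : ∀ (A B : ℝ), A^2 + B^2 = 1 → ({ε : ℝ | A + ε*B = 0}).Subsingleton := by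
    intro A B hAB x hx y hy
    simp only [Set.mem_setOf_eq] at hx hy
    by_cases hB : B = 0
    · exfalso
      rw [hB] at hAB hx
      simp at hx
      rw [hx] at hAB
      norm_num at hAB
    · have : (x - y)*B = 0 := by linarith
      rcases mul_eq_zero.mp this with h' | h'
      · linarith
      · exact absurd h' hB
  set Bad : Set ℝ := ⋃ S ∈ F', ({ε : ℝ | Real.sin (angOf S) + ε*Real.cos (angOf S) = 0}
      ∪ {ε : ℝ | -Real.cos (angOf S) + ε*Real.sin (angOf S) = 0}) with hBad
  have hfin : Bad.Finite := by
    apply Set.Finite.biUnion F'.finite_toSet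
    intro S _
    apply Set.Finite.union
    · apply Set.Subsingleton.finite
      apply hsub
      have := Real.sin_sq_add_cos_sq (angOf S)
      linarith
    · apply Set.Subsingleton.finite
      have := hsub (-Real.cos (angOf S)) (Real.sin (angOf S)) (by
        have := Real.sin_sq_add_cos_sq (angOf S); nlinarith [this])
      exact this
  have : ∃ ε : ℝ, ε ∉ Bad := by
    by_contra hcon
    push_neg at hcon
    have : (Set.univ : Set ℝ) ⊆ Bad := fun x _ => hcon x
    exact Set.infinite_univ (hfin.subset this)
  obtain ⟨ε, hε⟩ := this
  refine ⟨ε, fun S hS => ⟨?_, ?_⟩⟩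
  · intro hcon
    exact hε (Set.mem_biUnion hS (Or.inl hcon))
  · intro hcon
    exact hε (Set.mem_biUnion hS (Or.inr hcon))

/-- the extremal vertex -/
lemma extremal (F' : Finset (Set Pt)) (hne : F'.Nonempty)
    (hsq : ∀ S ∈ F', IsSquareSet S) :
    ∃ X ∈ F', ∃ q ∈ vertsOf X, ∀ T ∈ F', q ∈ T → q ∈ vertsOf T := by
  classical
  obtain ⟨ε, hε⟩ := generic_eps F'
  have H : ∀ S ∈ F', ∃ v, v ∈ vertsOf S ∧ (∀ x ∈ S, ell ε v ≤ ell ε x) ∧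
      (∀ x ∈ S, ell ε x = ell ε v → x = v) := by
    intro S hS
    obtain ⟨hpos, heq⟩ := sqData_spec (hsq S hS)
    obtain ⟨σ, τ, hσ, hτ, hmin, huniq⟩ :=
      ell_min_vertex ε (ctrOf S) (angOf S) (sideOf S) (hε S hS).1 (hε S hS).2
    refine ⟨sqVtx (ctrOf S) (angOf S) (sideOf S/2) σ τ, mem_vertsOf hσ hτ, ?_, ?_⟩
    · intro x hx
      exact hmin x (by rwa [← heq])
    · intro x hx
      exact huniq x (by rwa [← heq])
  choose! v hv1 hv2 hv3 using H
  obtain ⟨X, hX, hmin⟩ := F'.exists_min_image (fun S => ell ε (v S)) hne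
  refine ⟨X, hX, v X, hv1 X hX, ?_⟩
  intro T hT hqT
  have h1 : ell ε (v T) ≤ ell ε (v X) := hv2 T hT (v X) hqT
  have h2 : ell ε (v X) ≤ ell ε (v T) := hmin T hT
  have := hv3 T hT (v X) hqT (by linarith)
  rw [this]
  exact hv1 T hT

end SquaresProof

namespace SquaresProof

/-! ## counting -/

lemma depth_le (C : Finset (Set Pt)) (F' : Finset (Set Pt)) (hsub : F' ⊆ C) (p : Pt) :
    (F'.filter fun S => p ∈ S).card ≤ maxDeg C := by
  have h1 : (F'.filter fun S => p ∈ S).card ≤ (C.filter fun S => p ∈ S).card :=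
    Finset.card_le_card (Finset.filter_subset_filter _ hsub)
  have h2 : (C.filter fun S => p ∈ S).card ∈
      {n | ∃ p : Pt, (C.filter fun S => p ∈ S).card = n} := ⟨p, rfl⟩
  have h3 : BddAbove {n | ∃ p : Pt, (C.filter fun S => p ∈ S).card = n} := by
    refine ⟨C.card, ?_⟩
    rintro n ⟨q, rfl⟩
    exact Finset.card_filter_le _ _
  exact h1.trans (le_csSup h3 h2)

def mWeight (S T : Set Pt) : ℕ :=
  2 * ((vertsOf S).filter (fun v => v ∈ T)).card + (if ctrOf S ∈ T then 1 else 0)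

lemma mWeight_pair {S T : Set Pt} (hS : IsSquareSet S) (hT : IsSquareSet T)
    (hST : (S ∩ T).Nonempty) : 2 ≤ mWeight S T + mWeight T S := by
  rcases crossing hS hT hST with ⟨v, hv, hvT⟩ | ⟨v, hv, hvS⟩ | ⟨h1, h2⟩
  · have h : 0 < ((vertsOf S).filter (fun v => v ∈ T)).card :=
      Finset.card_pos.mpr ⟨v, Finset.mem_filter.mpr ⟨hv, hvT⟩⟩
    simp only [mWeight]
    omega
  · have h : 0 < ((vertsOf T).filter (fun v => v ∈ S)).card :=
      Finset.card_pos.mpr ⟨v, Finset.mem_filter.mpr ⟨hv, hvS⟩⟩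
    simp only [mWeight]
    omega
  · simp only [mWeight, if_pos h1, if_pos h2]
    omega

lemma famdeg_main (C : Finset (Set Pt)) (hsq : ∀ S ∈ C, IsSquareSet S)
    (hΔ : 2 ≤ maxDeg C) : FamDeg (9 * (maxDeg C - 1) - 1) C := by
  intro F' hsub hne
  by_contra hcon
  push_neg at hcon
  classical
  set d := maxDeg C - 1 with hd_def
  have hd1 : 1 ≤ d := by omega
  set N : Set Pt → Finset (Set Pt) :=
    fun S => F'.filter (fun T => T ≠ S ∧ (T ∩ S).Nonempty) with hN_def
  have hdeg : ∀ S ∈ F', 9*d ≤ (N S).card := by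
    intro S hS
    have h := hcon S hS
    simp only [hN_def]
    omega
  have hsq' : ∀ S ∈ F', IsSquareSet S := fun S hS => hsq S (hsub hS)
  have hpt : ∀ S ∈ F', ∀ p ∈ S, ((N S).filter (fun T => p ∈ T)).card ≤ d := by
    intro S hS p hp
    have hsubs : (N S).filter (fun T => p ∈ T) ⊆ (F'.filter fun T => p ∈ T).erase S := by
      intro T hT
      simp only [hN_def, Finset.filter_filter, Finset.mem_filter, Finset.mem_erase] at hT ⊢
      exact ⟨hT.2.1.1, hT.1, hT.2.2⟩
    have hSin : S ∈ F'.filter fun T => p ∈ T := Finset.mem_filter.mpr ⟨hS, hp⟩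
    have h1 := Finset.card_le_card hsubs
    rw [Finset.card_erase_of_mem hSin] at h1
    have h2 := depth_le C F' hsub p
    omega
  -- upper bound on the inner sums
  have hupper : ∀ S ∈ F', (∀ v ∈ vertsOf S, ((N S).filter (fun T => v ∈ T)).card ≤ d) →
      ∑ T ∈ N S, mWeight S T ≤ 9*d := by
    intro S hS hvb
    have e0 : ∑ T ∈ N S, mWeight S T
        = 2 * (∑ T ∈ N S, ((vertsOf S).filter (fun v => v ∈ T)).card)
          + ∑ T ∈ N S, (if ctrOf S ∈ T then 1 else 0) := by
      simp only [mWeight]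
      rw [Finset.sum_add_distrib, Finset.mul_sum]
    have e1 : ∑ T ∈ N S, ((vertsOf S).filter (fun v => v ∈ T)).card
        = ∑ v ∈ vertsOf S, ((N S).filter (fun T => v ∈ T)).card := by
      have := Finset.sum_comm (s := N S) (t := vertsOf S)
        (f := fun T v => if v ∈ T then 1 else 0)
      calc ∑ T ∈ N S, ((vertsOf S).filter (fun v => v ∈ T)).card
          = ∑ T ∈ N S, ∑ v ∈ vertsOf S, (if v ∈ T then 1 else 0) := by
            refine Finset.sum_congr rfl (fun T _ => ?_)
            rw [Finset.card_filter]
        _ = ∑ v ∈ vertsOf S, ∑ T ∈ N S, (if v ∈ T then 1 else 0) := this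
        _ = ∑ v ∈ vertsOf S, ((N S).filter (fun T => v ∈ T)).card := by
            refine Finset.sum_congr rfl (fun v _ => ?_)
            rw [Finset.card_filter]
    have e2 : ∑ v ∈ vertsOf S, ((N S).filter (fun T => v ∈ T)).card ≤ 4*d := by
      calc ∑ v ∈ vertsOf S, ((N S).filter (fun T => v ∈ T)).card
          ≤ ∑ _v ∈ vertsOf S, d := Finset.sum_le_sum hvb
        _ = (vertsOf S).card * d := by rw [Finset.sum_const, smul_eq_mul]
        _ ≤ 4*d := Nat.mul_le_mul_right d (card_vertsOf S)
    have e3 : ∑ T ∈ N S, (if ctrOf S ∈ T then 1 else 0) ≤ d := by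
      rw [← Finset.card_filter]
      exact hpt S hS (ctrOf S) (ctrOf_mem_self (hsq' S hS))
    omega
  have hupper' : ∀ S ∈ F', ∑ T ∈ N S, mWeight S T ≤ 9*d := by
    intro S hS
    refine hupper S hS (fun v hv => hpt S hS v (vertsOf_mem_self (hsq' S hS) v hv))
  -- swapping the double sum
  have hswap : ∑ S ∈ F', ∑ T ∈ N S, mWeight T S = ∑ S ∈ F', ∑ T ∈ N S, mWeight S T := by
    refine Finset.sum_comm' ?_
    intro S T
    simp only [hN_def, Finset.mem_filter]
    constructor
    · rintro ⟨h1, h2, h3, h4⟩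
      exact ⟨⟨h1, Ne.symm h3, by rwa [Set.inter_comm]⟩, h2⟩
    · rintro ⟨⟨h1, h3, h4⟩, h2⟩
      exact ⟨h1, h2, Ne.symm h3, by rwa [Set.inter_comm]⟩
  have hpair : ∀ S ∈ F', ∀ T ∈ N S, 2 ≤ mWeight S T + mWeight T S := by
    intro S hS T hT
    simp only [hN_def, Finset.mem_filter] at hT
    exact mWeight_pair (hsq' S hS) (hsq' T hT.1) (by rw [Set.inter_comm]; exact hT.2.2)
  -- the extremal vertex
  obtain ⟨X, hX, q, hqvX, hq⟩ := extremal F' hne hsq'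
  have hqX : q ∈ X := vertsOf_mem_self (hsq' X hX) q hqvX
  by_cases hT0 : ∃ T0 ∈ F', T0 ≠ X ∧ q ∈ T0
  · -- case 1 : improved lower bound
    obtain ⟨T0, hT0F, hT0ne, hqT0⟩ := hT0
    have hqvT0 : q ∈ vertsOf T0 := hq T0 hT0F hqT0
    have hT0N : T0 ∈ N X := by
      simp only [hN_def, Finset.mem_filter]
      exact ⟨hT0F, hT0ne, ⟨q, hqT0, hqX⟩⟩
    have hm1 : 2 ≤ mWeight X T0 := by
      have h : 0 < ((vertsOf X).filter (fun v => v ∈ T0)).card :=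
        Finset.card_pos.mpr ⟨q, Finset.mem_filter.mpr ⟨hqvX, hqT0⟩⟩
      simp only [mWeight]
      omega
    have hm2 : 2 ≤ mWeight T0 X := by
      have h : 0 < ((vertsOf T0).filter (fun v => v ∈ X)).card :=
        Finset.card_pos.mpr ⟨q, Finset.mem_filter.mpr ⟨hqvT0, hqX⟩⟩
      simp only [mWeight]
      omega
    have hlow : ∀ S ∈ F',
        2*(N S).card + (if S = X then 2 else 0) ≤ ∑ T ∈ N S, (mWeight S T + mWeight T S) := by
      intro S hS
      by_cases he1 : S = X
      · subst he1
        rw [if_pos rfl]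
        have hsplit : ∑ T ∈ N S, (mWeight S T + mWeight T S)
            = (mWeight S T0 + mWeight T0 S)
              + ∑ T ∈ (N S).erase T0, (mWeight S T + mWeight T S) :=
          (Finset.add_sum_erase (N S) (fun T => mWeight S T + mWeight T S) hT0N).symm
        have hrest : 2*((N S).erase T0).card ≤
            ∑ T ∈ (N S).erase T0, (mWeight S T + mWeight T S) := by
          have := Finset.card_nsmul_le_sum ((N S).erase T0)
            (fun T => mWeight S T + mWeight T S) 2
            (fun T hT => hpair S hS T (Finset.mem_of_mem_erase hT))
          simpa [mul_comm] using this
        have hcard : ((N S).erase T0).card = (N S).card - 1 :=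
          Finset.card_erase_of_mem hT0N
        have hpos : 1 ≤ (N S).card := Finset.card_pos.mpr ⟨T0, hT0N⟩
        omega
      · rw [if_neg he1]
        have := Finset.card_nsmul_le_sum (N S)
          (fun T => mWeight S T + mWeight T S) 2 (fun T hT => hpair S hS T hT)
        simpa [mul_comm] using this
    have hlowsum := Finset.sum_le_sum hlow
    rw [Finset.sum_add_distrib] at hlowsum
    have hX2 : ∑ S ∈ F', (if S = X then 2 else 0) = 2 := by
      rw [Finset.sum_ite_eq' F' X (fun _ => 2), if_pos hX]
    rw [hX2] at hlowsum
    -- also the X-side gives another +2 via T0; we double count using both orders: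
    have hR : ∑ S ∈ F', ∑ T ∈ N S, (mWeight S T + mWeight T S)
        = 2 * ∑ S ∈ F', ∑ T ∈ N S, mWeight S T := by
      calc ∑ S ∈ F', ∑ T ∈ N S, (mWeight S T + mWeight T S)
          = (∑ S ∈ F', ∑ T ∈ N S, mWeight S T) + ∑ S ∈ F', ∑ T ∈ N S, mWeight T S := by
            rw [← Finset.sum_add_distrib]
            exact Finset.sum_congr rfl (fun S _ => Finset.sum_add_distrib)
        _ = 2 * ∑ S ∈ F', ∑ T ∈ N S, mWeight S T := by rw [hswap]; ring
    have hU : ∑ S ∈ F', ∑ T ∈ N S, mWeight S T ≤ ∑ S ∈ F', 9*d :=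
      Finset.sum_le_sum hupper'
    have hD : ∑ S ∈ F', 2*(9*d) ≤ ∑ S ∈ F', 2*(N S).card :=
      Finset.sum_le_sum (fun S hS => by have := hdeg S hS; omega)
    have hE : ∑ S ∈ F', 2*(9*d) = 2 * ∑ S ∈ F', 9*d := by
      rw [← Finset.mul_sum]
    -- need strict improvement: the (T0, X) pair also contributes 2. We bundled only X's +2.
    -- 2*Σ9d + 2 ≤ Σ2deg + 2 ≤ 2 TOT ≤ 2*Σ9d : contradiction
    omega
  · -- case 2 : the vertex q lies in no other member
    push_neg at hT0
    have hAX : ∑ T ∈ N X, mWeight X T ≤ 7*d := by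
      have e0 : ∑ T ∈ N X, mWeight X T
          = 2 * (∑ T ∈ N X, ((vertsOf X).filter (fun v => v ∈ T)).card)
            + ∑ T ∈ N X, (if ctrOf X ∈ T then 1 else 0) := by
        simp only [mWeight]
        rw [Finset.sum_add_distrib, Finset.mul_sum]
      have e1 : ∑ T ∈ N X, ((vertsOf X).filter (fun v => v ∈ T)).card
          = ∑ v ∈ vertsOf X, ((N X).filter (fun T => v ∈ T)).card := by
        calc ∑ T ∈ N X, ((vertsOf X).filter (fun v => v ∈ T)).card
            = ∑ T ∈ N X, ∑ v ∈ vertsOf X, (if v ∈ T then 1 else 0) := by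
              refine Finset.sum_congr rfl (fun T _ => ?_)
              rw [Finset.card_filter]
          _ = ∑ v ∈ vertsOf X, ∑ T ∈ N X, (if v ∈ T then 1 else 0) := Finset.sum_comm
          _ = ∑ v ∈ vertsOf X, ((N X).filter (fun T => v ∈ T)).card := by
              refine Finset.sum_congr rfl (fun v _ => ?_)
              rw [Finset.card_filter]
      have hqzero : ((N X).filter (fun T => q ∈ T)).card = 0 := by
        rw [Finset.card_eq_zero]
        rw [Finset.filter_eq_empty_iff]
        intro T hT
        simp only [hN_def, Finset.mem_filter] at hT
        exact hT0 T hT.1 hT.2.1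
      have e2 : ∑ v ∈ vertsOf X, ((N X).filter (fun T => v ∈ T)).card ≤ 3*d := by
        have hsplit : ∑ v ∈ vertsOf X, ((N X).filter (fun T => v ∈ T)).card
          = ((N X).filter (fun T => q ∈ T)).card
            + ∑ v ∈ (vertsOf X).erase q, ((N X).filter (fun T => v ∈ T)).card :=
        (Finset.add_sum_erase (vertsOf X)
          (fun v => ((N X).filter (fun T => v ∈ T)).card) hqvX).symm
        have hrest : ∑ v ∈ (vertsOf X).erase q, ((N X).filter (fun T => v ∈ T)).card
            ≤ 3*d := by
          calc ∑ v ∈ (vertsOf X).erase q, ((N X).filter (fun T => v ∈ T)).card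
              ≤ ∑ _v ∈ (vertsOf X).erase q, d := Finset.sum_le_sum
                (fun v hv => hpt X hX v
                  (vertsOf_mem_self (hsq' X hX) v (Finset.mem_of_mem_erase hv)))
            _ = ((vertsOf X).erase q).card * d := by rw [Finset.sum_const, smul_eq_mul]
            _ ≤ 3*d := by
                have h1 : ((vertsOf X).erase q).card = (vertsOf X).card - 1 :=
                  Finset.card_erase_of_mem hqvX
                have h2 := card_vertsOf X
                have h3 : ((vertsOf X).erase q).card ≤ 3 := by omega
                exact Nat.mul_le_mul_right d h3
        omega
      have e3 : ∑ T ∈ N X, (if ctrOf X ∈ T then 1 else 0) ≤ d := by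
        rw [← Finset.card_filter]
        exact hpt X hX (ctrOf X) (ctrOf_mem_self (hsq' X hX))
      omega
    -- lower bound
    have hlow : ∀ S ∈ F', 2*(N S).card ≤ ∑ T ∈ N S, (mWeight S T + mWeight T S) := by
      intro S hS
      have := Finset.card_nsmul_le_sum (N S)
        (fun T => mWeight S T + mWeight T S) 2 (fun T hT => hpair S hS T hT)
      simpa [mul_comm] using this
    have hlowsum := Finset.sum_le_sum hlow
    have hR : ∑ S ∈ F', ∑ T ∈ N S, (mWeight S T + mWeight T S)
        = 2 * ∑ S ∈ F', ∑ T ∈ N S, mWeight S T := by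
      calc ∑ S ∈ F', ∑ T ∈ N S, (mWeight S T + mWeight T S)
          = (∑ S ∈ F', ∑ T ∈ N S, mWeight S T) + ∑ S ∈ F', ∑ T ∈ N S, mWeight T S := by
            rw [← Finset.sum_add_distrib]
            exact Finset.sum_congr rfl (fun S _ => Finset.sum_add_distrib)
        _ = 2 * ∑ S ∈ F', ∑ T ∈ N S, mWeight S T := by rw [hswap]; ring
    -- upper bound with the improvement at X
    have hsplit : ∑ S ∈ F', ∑ T ∈ N S, mWeight S T
        = (∑ T ∈ N X, mWeight X T) + ∑ S ∈ F'.erase X, ∑ T ∈ N S, mWeight S T :=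
      (Finset.add_sum_erase F' (fun S => ∑ T ∈ N S, mWeight S T) hX).symm
    have hrest : ∑ S ∈ F'.erase X, ∑ T ∈ N S, mWeight S T
        ≤ ∑ S ∈ F'.erase X, 9*d := Finset.sum_le_sum
          (fun S hS => hupper' S (Finset.mem_of_mem_erase hS))
    have hconst1 : ∑ S ∈ F'.erase X, 9*d = (F'.erase X).card * (9*d) := by
      rw [Finset.sum_const, smul_eq_mul]
    have hconst2 : ∑ S ∈ F', 2*(9*d) ≤ ∑ S ∈ F', 2*(N S).card :=
      Finset.sum_le_sum (fun S hS => by have := hdeg S hS; omega)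
    have hconst3 : ∑ S ∈ F', 2*(9*d) = F'.card * (2*(9*d)) := by
      rw [Finset.sum_const, smul_eq_mul]
    have hcard : (F'.erase X).card = F'.card - 1 := Finset.card_erase_of_mem hX
    rw [hcard] at hconst1
    have hn1 : 1 ≤ F'.card := Finset.card_pos.mpr hne
    -- TOT ≤ 7d + (n-1)*9d = n*9d - 2d;  2*TOT ≥ 2*n*9d
    have hfin1 : ∑ S ∈ F', ∑ T ∈ N S, mWeight S T ≤ 7*d + (F'.card - 1)*(9*d) := by
      omega
    have hfin2 : F'.card * (2*(9*d)) ≤ 2 * ∑ S ∈ F', ∑ T ∈ N S, mWeight S T := by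
      omega
    -- combine: 18nd ≤ 2*TOT ≤ 14d + (n-1)*18d = 18nd - 4d, contradiction since d ≥ 1
    have : F'.card * (2*(9*d)) ≤ 2*(7*d + (F'.card - 1)*(9*d)) := by omega
    have hexp : 2*(7*d + (F'.card - 1)*(9*d)) + 4*d = F'.card * (2*(9*d)) := by
      cases' Nat.exists_eq_add_of_le hn1 with m hm
      rw [hm, Nat.add_sub_cancel_left]
      ring
    omega

lemma greedy (D : ℕ) :
    ∀ F : Finset (Set Pt), (∀ F' ⊆ F, F'.Nonempty → ∃ S ∈ F',
        (F'.filter fun T => T ≠ S ∧ (T ∩ S).Nonempty).card ≤ D) →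
      ∃ col : Set Pt → ℕ, (∀ S ∈ F, col S < D + 1) ∧
        ∀ S ∈ F, ∀ T ∈ F, S ≠ T → (S ∩ T).Nonempty → col S ≠ col T := by
  intro F
  induction F using Finset.strongInduction with
  | _ F IH =>
    intro hdeg
    rcases F.eq_empty_or_nonempty with rfl | hne
    · exact ⟨fun _ => 0, by simp, by simp⟩
    · obtain ⟨S, hS, hcard⟩ := hdeg F (subset_refl F) hne
      have hsub' : F.erase S ⊂ F := Finset.erase_ssubset hS
      obtain ⟨col', hcol1, hcol2⟩ := IH (F.erase S) hsub'
        (fun F'' h'' hne'' => hdeg F'' (h''.trans (Finset.erase_subset S F)) hne'')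
      set NS := F.filter (fun T => T ≠ S ∧ (T ∩ S).Nonempty) with hNS
      have hex : ∃ c0 ∈ Finset.range (D+1), c0 ∉ NS.image col' := by
        by_contra hco
        push_neg at hco
        have hsub2 : Finset.range (D+1) ⊆ NS.image col' := fun x hx => hco x hx
        have h1 := Finset.card_le_card hsub2
        rw [Finset.card_range] at h1
        have h2 : (NS.image col').card ≤ D := le_trans Finset.card_image_le hcard
        omega
      obtain ⟨c0, hc0r, hc0n⟩ := hex
      refine ⟨fun X => if X = S then c0 else col' X, ?_, ?_⟩
      · intro T hT
        dsimp only
        by_cases he : T = S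
        · rw [if_pos he]; exact Finset.mem_range.mp hc0r
        · rw [if_neg he]; exact hcol1 T (Finset.mem_erase.mpr ⟨he, hT⟩)
      · intro A hA B hB hne' hint
        dsimp only
        by_cases heA : A = S
        · subst heA
          rw [if_pos rfl, if_neg (Ne.symm hne')]
          have hBN : B ∈ NS := Finset.mem_filter.mpr
            ⟨hB, Ne.symm hne', by rwa [Set.inter_comm]⟩
          intro hcontra
          exact hc0n (Finset.mem_image.mpr ⟨B, hBN, hcontra.symm⟩)
        · by_cases heB : B = S
          · subst heB
            rw [if_neg heA, if_pos rfl]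
            have hAN : A ∈ NS := Finset.mem_filter.mpr ⟨hA, heA, hint⟩
            intro hcontra
            exact hc0n (Finset.mem_image.mpr ⟨A, hAN, hcontra⟩)
          · rw [if_neg heA, if_neg heB]
            exact hcol2 A (Finset.mem_erase.mpr ⟨heA, hA⟩)
              B (Finset.mem_erase.mpr ⟨heB, hB⟩) hne' hint

lemma chrom_le (C : Finset (Set Pt)) (hsq : ∀ S ∈ C, IsSquareSet S)
    (hΔ : 2 ≤ maxDeg C) : chromNum C ≤ 9 * (maxDeg C - 1) := by
  have hfd := famdeg_main C hsq hΔ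
  obtain ⟨col, h1, h2⟩ := greedy (9*(maxDeg C - 1) - 1) C hfd
  have hD : 9*(maxDeg C - 1) - 1 + 1 = 9*(maxDeg C - 1) := by omega
  apply Nat.sInf_le
  refine ⟨col, ?_, h2⟩
  intro S hS
  rw [← hD]
  exact h1 S hS

theorem main_thm (C : Finset (Set Pt)) (h : ∀ S ∈ C, IsSquareSet S) (hΔ : 2 ≤ maxDeg C) :
    FamDeg (9 * (maxDeg C - 1) - 1) C ∧ chromNum C ≤ 9 * (maxDeg C - 1) :=
  ⟨famdeg_main C h hΔ, chrom_le C h hΔ⟩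

end SquaresProof

theorem stmt_18 (C : Finset (Set Pt)) (h : ∀ S ∈ C, IsSquareSet S) (hΔ : 2 ≤ maxDeg C) :
    FamDeg (9 * (maxDeg C - 1) - 1) C ∧ chromNum C ≤ 9 * (maxDeg C - 1) := ⟨SquaresProof.famdeg_main C h hΔ, SquaresProof.chrom_le C h hΔ⟩
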